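/- Let G be a finite abelian group and let ρ, σ be irreducible complex characters of G (extended linearly to C[G]). Then ρ and σ agree on the module W(G) spanned by the simple quantities of generator-sets of cyclic subgroups of G if and only if ker(ρ) = ker(σ). -/

import Mathlib

open MonoidAlgebra

/-- The linear extension of a character `χ : G →* ℂ` to the group algebra `ℂ[G]`. -/
noncomputable def charExt {G : Type*} [CommGroup G] (χ : G →* ℂ) :
    MonoidAlgebra ℂ G → ℂ :=
  fun x => x.coeff.sum fun g c => c * χ g

/-- The module `W(G)`: the `ℂ`-span of the simple quantities of the generator sets of
the cyclic subgroups of `G`. -/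
noncomputable def Wmod (G : Type*) [CommGroup G] [Fintype G] :
    Submodule ℂ (MonoidAlgebra ℂ G) :=
  Submodule.span ℂ (Set.range fun H : {H : Subgroup G // IsCyclic H} =>
    ∑ᶠ g ∈ {g : G | Subgroup.zpowers g = H.1}, MonoidAlgebra.single g (1 : ℂ))

open Finset
set_option linter.unusedSectionVars false
open scoped Classical

section Aux

variable {G : Type*} [CommGroup G] [Fintype G]

/-- The set of generators of `C` (empty if `C` is not cyclic). -/
noncomputable def genFinset (C : Subgroup G) : Finset G :=
  univ.filter (fun g => Subgroup.zpowers g = C)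

lemma zpowers_isCyclic (g : G) : IsCyclic (Subgroup.zpowers g) := by
  constructor
  refine ⟨⟨g, Subgroup.mem_zpowers g⟩, ?_⟩
  rintro ⟨x, k, rfl⟩
  exact ⟨k, by ext; simp⟩

lemma charExt_eq_linearCombination (χ : G →* ℂ) :
    charExt χ = ⇑(Finsupp.linearCombination ℂ (⇑χ) ∘ₗ (MonoidAlgebra.coeffLinearEquiv ℂ).toLinearMap) := by
  ext x
  simp [charExt, Finsupp.linearCombination_apply, Finsupp.sum]

/-- `charExt χ` of the generator element of `C`. -/
lemma charExt_gen (χ : G →* ℂ) (C : Subgroup G) :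
    charExt χ (∑ᶠ g ∈ {g : G | Subgroup.zpowers g = C}, MonoidAlgebra.single g (1 : ℂ)) =
      ∑ g ∈ genFinset C, χ g := by
  have hset : {g : G | Subgroup.zpowers g = C} = ↑(genFinset C) := by
    ext g; simp [genFinset]
  rw [hset, finsum_mem_coe_finset, charExt_eq_linearCombination, map_sum]
  refine Finset.sum_congr rfl fun g _ => ?_
  simp [Finsupp.linearCombination_single]

/-- Sum of a character over a subgroup. -/
lemma sum_subgroup_eq (χ : G →* ℂ) (H : Subgroup G) :
    ∑ g ∈ univ.filter (· ∈ H), χ g =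
      if ∀ g ∈ H, χ g = 1 then ((univ.filter (· ∈ H)).card : ℂ) else 0 := by
  split_ifs with h
  · rw [Finset.sum_congr rfl fun g hg => h g (by simpa using hg)]
    simp
  · rw [Finset.sum_subtype (p := (· ∈ H)) _ (by simp)]
    have hne : χ.comp H.subtype ≠ 1 := by
      intro he; apply h; intro g hg
      have := DFunLike.congr_fun he ⟨g, hg⟩; simpa using this
    simpa using sum_hom_units_eq_zero (χ.comp H.subtype) hne

/-- Partition of the sum over a subgroup into generator-sums over the cyclic subgroups
generated by its elements. -/
lemma sum_subgroup_partition (χ : G →* ℂ) (H : Subgroup G) :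
    ∑ g ∈ univ.filter (· ∈ H), χ g =
      ∑ C ∈ (univ.filter (· ∈ H)).image (fun g => Subgroup.zpowers g),
        ∑ g ∈ genFinset C, χ g := by
  have h1 := Finset.sum_fiberwise_of_maps_to (s := univ.filter (· ∈ H))
    (t := (univ.filter (· ∈ H)).image (fun g => Subgroup.zpowers g))
    (g := fun g => Subgroup.zpowers g) (fun g hg => Finset.mem_image_of_mem _ hg) (fun g => χ g)
  rw [← h1]
  refine Finset.sum_congr rfl fun C hC => ?_
  obtain ⟨g₀, hg₀, rfl⟩ := Finset.mem_image.mp hC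
  refine Finset.sum_congr ?_ fun _ _ => rfl
  ext g
  simp only [genFinset, Finset.mem_filter, Finset.mem_univ, true_and, and_iff_right_iff_imp]
  intro hg
  have : g ∈ Subgroup.zpowers g₀ := hg ▸ Subgroup.mem_zpowers g
  exact ((Subgroup.zpowers_le).mpr (by simpa using hg₀)) this

lemma gen_sum_eq_of_ker_eq {ρ σ : G →* ℂ}
    (hker : {g : G | ρ g = 1} = {g : G | σ g = 1}) (C : Subgroup G) :
    ∑ g ∈ genFinset C, ρ g = ∑ g ∈ genFinset C, σ g := by
  have key : ∀ n (C : Subgroup G), (univ.filter (· ∈ C)).card = n →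
      ∑ g ∈ genFinset C, ρ g = ∑ g ∈ genFinset C, σ g := by
    intro n
    induction n using Nat.strong_induction_on with
    | _ n ih =>
      intro C hn
      by_cases hcyc : ∃ g : G, Subgroup.zpowers g = C
      · obtain ⟨g₀, hg₀⟩ := hcyc
        have hCmem : C ∈ (univ.filter (· ∈ C)).image (fun g => Subgroup.zpowers g) :=
          Finset.mem_image.mpr ⟨g₀, by simp [hg₀ ▸ Subgroup.mem_zpowers g₀], hg₀⟩
        have hsum : ∀ χ : G →* ℂ, ∑ g ∈ univ.filter (· ∈ C), χ g =
            (∑ g ∈ genFinset C, χ g) +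
            ∑ D ∈ ((univ.filter (· ∈ C)).image (fun g => Subgroup.zpowers g)).erase C,
              ∑ g ∈ genFinset D, χ g := by
          intro χ
          rw [sum_subgroup_partition χ C, ← Finset.add_sum_erase _ _ hCmem]
        have hS : ∑ g ∈ univ.filter (· ∈ C), ρ g = ∑ g ∈ univ.filter (· ∈ C), σ g := by
          rw [sum_subgroup_eq, sum_subgroup_eq]
          have : (∀ g ∈ C, ρ g = 1) ↔ (∀ g ∈ C, σ g = 1) := by
            constructor <;> intro h g hg
            · have : g ∈ {g : G | σ g = 1} := hker ▸ (h g hg : ρ g = 1)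
              exact this
            · have : g ∈ {g : G | ρ g = 1} := hker.symm ▸ (h g hg : σ g = 1)
              exact this
          by_cases h : ∀ g ∈ C, ρ g = 1
          · rw [if_pos h, if_pos (this.mp h)]
          · rw [if_neg h, if_neg (fun hc => h (this.mpr hc))]
        have hrest : ∀ D ∈ ((univ.filter (· ∈ C)).image (fun g => Subgroup.zpowers g)).erase C,
            ∑ g ∈ genFinset D, ρ g = ∑ g ∈ genFinset D, σ g := by
          intro D hD
          have hDne : D ≠ C := (Finset.mem_erase.mp hD).1
          obtain ⟨g₁, hg₁, rfl⟩ := Finset.mem_image.mp (Finset.mem_erase.mp hD).2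
          have hg₁C : g₁ ∈ C := by simpa using hg₁
          have hle : Subgroup.zpowers g₁ ≤ C := Subgroup.zpowers_le.mpr hg₁C
          have hlt : (univ.filter (· ∈ Subgroup.zpowers g₁)).card < n := by
            rw [← hn]
            apply Finset.card_lt_card
            rw [Finset.ssubset_iff_subset_ne]
            constructor
            · intro x hx
              simp only [Finset.mem_filter, Finset.mem_univ, true_and] at hx ⊢
              exact hle hx
            · intro heq
              apply hDne
              apply le_antisymm hle
              intro x hx
              have : x ∈ univ.filter (· ∈ Subgroup.zpowers g₁) := by
                rw [heq]; simpa using hx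
              simpa using this
          exact ih _ hlt _ rfl
        have := hsum ρ
        rw [hS, hsum σ, Finset.sum_congr rfl hrest] at this
        exact (add_right_cancel this).symm
      · have : genFinset C = ∅ := by
          rw [Finset.eq_empty_iff_forall_notMem]
          intro g hg
          exact hcyc ⟨g, by simpa [genFinset] using hg⟩
        simp [this]
  exact key _ C rfl

end Aux

/-- two irreducible characters of a finite abelian group agree on `W(G)`
iff they have the same kernel. -/
theorem stmt_3 {G : Type*} [CommGroup G] [Fintype G] (ρ σ : G →* ℂ) :
    (∀ w ∈ Wmod G, charExt ρ w = charExt σ w) ↔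
      {g : G | ρ g = 1} = {g : G | σ g = 1} := by
  constructor
  · intro hW
    -- On each cyclic subgroup `C`, the generator-sums agree.
    have hT : ∀ C : Subgroup G, (∃ g : G, Subgroup.zpowers g = C) →
        ∑ g ∈ genFinset C, ρ g = ∑ g ∈ genFinset C, σ g := by
      rintro C ⟨g, rfl⟩
      have hmem : (∑ᶠ g' ∈ {g' : G | Subgroup.zpowers g' = Subgroup.zpowers g},
          MonoidAlgebra.single g' (1 : ℂ)) ∈ Wmod G := by
        apply Submodule.subset_span
        exact ⟨⟨Subgroup.zpowers g, zpowers_isCyclic g⟩, rfl⟩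
      have := hW _ hmem
      rwa [charExt_gen, charExt_gen] at this
    have hsum : ∀ g : G, ∑ h ∈ univ.filter (· ∈ Subgroup.zpowers g), ρ h =
        ∑ h ∈ univ.filter (· ∈ Subgroup.zpowers g), σ h := by
      intro g
      rw [sum_subgroup_partition, sum_subgroup_partition]
      refine Finset.sum_congr rfl fun C hC => ?_
      obtain ⟨g₀, _, rfl⟩ := Finset.mem_image.mp hC
      exact hT _ ⟨g₀, rfl⟩
    -- Deduce kernel equality.
    have main : ∀ τ₁ τ₂ : G →* ℂ,
        (∀ g : G, ∑ h ∈ univ.filter (· ∈ Subgroup.zpowers g), τ₁ h =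
          ∑ h ∈ univ.filter (· ∈ Subgroup.zpowers g), τ₂ h) →
        ∀ g : G, τ₁ g = 1 → τ₂ g = 1 := by
      intro τ₁ τ₂ hs g hg
      have h1 : ∀ h ∈ Subgroup.zpowers g, τ₁ h = 1 := by
        rintro _ ⟨k, rfl⟩
        simp [hg]
      have hcard : ((univ.filter (· ∈ Subgroup.zpowers g)).card : ℂ) ≠ 0 := by
        have hpos : 0 < (univ.filter (· ∈ Subgroup.zpowers g)).card :=
          Finset.card_pos.mpr ⟨g, by simp [Subgroup.mem_zpowers g]⟩
        exact Nat.cast_ne_zero.mpr hpos.ne'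
      have := hs g
      rw [sum_subgroup_eq, sum_subgroup_eq, if_pos h1] at this
      by_cases h2 : ∀ h ∈ Subgroup.zpowers g, τ₂ h = 1
      · exact h2 g (Subgroup.mem_zpowers g)
      · rw [if_neg h2] at this
        exact absurd this hcard
    ext g
    simp only [Set.mem_setOf_eq]
    exact ⟨main ρ σ hsum g, main σ ρ (fun g => (hsum g).symm) g⟩
  · intro hker
    intro w hw
    rw [charExt_eq_linearCombination, charExt_eq_linearCombination]
    have : Wmod G ≤ LinearMap.eqLocus (Finsupp.linearCombination ℂ (⇑ρ) ∘ₗ (MonoidAlgebra.coeffLinearEquiv ℂ).toLinearMap)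
        (Finsupp.linearCombination ℂ (⇑σ) ∘ₗ (MonoidAlgebra.coeffLinearEquiv ℂ).toLinearMap) := by
      rw [Wmod, Submodule.span_le]
      rintro _ ⟨⟨C, hC⟩, rfl⟩
      show (Finsupp.linearCombination ℂ (⇑ρ) ∘ₗ (MonoidAlgebra.coeffLinearEquiv ℂ).toLinearMap) _ = (Finsupp.linearCombination ℂ (⇑σ) ∘ₗ (MonoidAlgebra.coeffLinearEquiv ℂ).toLinearMap) _
      rw [← charExt_eq_linearCombination, ← charExt_eq_linearCombination,
        charExt_gen, charExt_gen]
      exact gen_sum_eq_of_ker_eq hker C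
    exact this hw
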